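/- Define F(C) := 2 ∫_1^{√(1+e^{2C})} √(2C − log(u² − 1)) du. Then F is differentiable on ℝ and F'(C) = 2ℓ_C, where ℓ_C = ∫_1^{√(1+e^{2C})} du/√(2C − log(u² − 1)). -/

import Mathlib

open MeasureTheory intervalIntegral Real

noncomputable def ell (C : ℝ) : ℝ :=
  ∫ u in (1 : ℝ)..Real.sqrt (1 + Real.exp (2 * C)),
    (Real.sqrt (2 * C - Real.log (u ^ 2 - 1)))⁻¹

/-- Head contribution to the energy of the solitary wave. -/
noncomputable def F (C : ℝ) : ℝ :=
  2 * ∫ u in (1 : ℝ)..Real.sqrt (1 + Real.exp (2 * C)),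
    Real.sqrt (2 * C - Real.log (u ^ 2 - 1))

namespace FHasDeriv

open Set Filter

/-- The substitution map. -/
noncomputable def phi (C s : ℝ) : ℝ := Real.sqrt (1 + Real.exp (2 * C - s ^ 2))

lemma one_add_exp_pos (C s : ℝ) : 0 < 1 + Real.exp (2 * C - s ^ 2) := by positivity

lemma phi_pos (C s : ℝ) : 0 < phi C s := Real.sqrt_pos.2 (one_add_exp_pos C s)

lemma one_lt_phi (C s : ℝ) : 1 < phi C s := by
  rw [phi]
  exact Real.lt_sqrt_of_sq_lt (by nlinarith [Real.exp_pos (2 * C - s ^ 2)])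

lemma one_le_phi (C s : ℝ) : 1 ≤ phi C s := (one_lt_phi C s).le

lemma phi_sq (C s : ℝ) : phi C s ^ 2 = 1 + Real.exp (2 * C - s ^ 2) :=
  Real.sq_sqrt (one_add_exp_pos C s).le

lemma phi_sub_one_le (C s : ℝ) : phi C s - 1 ≤ Real.exp (2 * C - s ^ 2) := by
  have h := Real.exp_pos (2 * C - s ^ 2)
  have : phi C s ≤ 1 + Real.exp (2 * C - s ^ 2) := by
    rw [phi]
    rw [Real.sqrt_le_left (by positivity)]
    nlinarith
  linarith

/-- Derivative of `phi` in the `s` variable. -/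
lemma hasDerivAt_phi_s (C s : ℝ) :
    HasDerivAt (phi C) (-(s * Real.exp (2 * C - s ^ 2) / phi C s)) s := by
  have h1 : HasDerivAt (fun t : ℝ => 2 * C - t ^ 2) (-(2 * s)) s := by
    simpa using (hasDerivAt_pow 2 s).const_sub (2 * C)
  have h2 : HasDerivAt (fun t : ℝ => 1 + Real.exp (2 * C - t ^ 2))
      (Real.exp (2 * C - s ^ 2) * -(2 * s)) s := (h1.exp).const_add 1
  have h3 := (Real.hasDerivAt_sqrt (one_add_exp_pos C s).ne').comp s h2
  refine h3.congr_deriv ?_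
  rw [phi]
  field_simp

/-- Derivative of `phi` in the `C` variable. -/
lemma hasDerivAt_phi_C (s x : ℝ) :
    HasDerivAt (fun C => phi C s) (Real.exp (2 * x - s ^ 2) / phi x s) x := by
  have h1 : HasDerivAt (fun C : ℝ => 2 * C - s ^ 2) 2 x := by
    simpa using ((hasDerivAt_id x).const_mul 2).sub_const (s ^ 2)
  have h2 : HasDerivAt (fun C : ℝ => 1 + Real.exp (2 * C - s ^ 2))
      (Real.exp (2 * x - s ^ 2) * 2) x := (h1.exp).const_add 1
  have h3 := (Real.hasDerivAt_sqrt (one_add_exp_pos x s).ne').comp x h2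
  refine h3.congr_deriv ?_
  rw [phi]
  field_simp

lemma continuous_phi (C : ℝ) : Continuous (phi C) := by
  apply Real.continuous_sqrt.comp
  exact continuous_const.add ((continuous_const.sub (continuous_pow 2)).rexp)

lemma phi_strictAntiOn (C : ℝ) : StrictAntiOn (phi C) (Ioi 0) := by
  intro a ha b hb hab
  apply Real.sqrt_lt_sqrt (one_add_exp_pos C b).le
  have : a ^ 2 < b ^ 2 := by nlinarith [mem_Ioi.1 ha]
  have := Real.exp_lt_exp.2 (show 2 * C - b ^ 2 < 2 * C - a ^ 2 by linarith)
  linarith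

lemma phi_image (C : ℝ) :
    phi C '' Ioi 0 = Ioo 1 (Real.sqrt (1 + Real.exp (2 * C))) := by
  ext u
  constructor
  · rintro ⟨s, hs, rfl⟩
    have hs' : 0 < s := mem_Ioi.1 hs
    refine ⟨one_lt_phi C s, ?_⟩
    apply Real.sqrt_lt_sqrt (one_add_exp_pos C s).le
    have : Real.exp (2 * C - s ^ 2) < Real.exp (2 * C) :=
      Real.exp_lt_exp.2 (by nlinarith)
    linarith
  · rintro ⟨h1, h2⟩
    have hu0 : 0 < u := lt_trans one_pos h1
    have husq : 1 < u ^ 2 := by nlinarith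
    have hlt : u ^ 2 < 1 + Real.exp (2 * C) := by
      have := Real.sq_sqrt (show (0:ℝ) ≤ 1 + Real.exp (2 * C) by positivity)
      nlinarith [h2, hu0, Real.sqrt_nonneg (1 + Real.exp (2 * C))]
    have hlog : Real.log (u ^ 2 - 1) < 2 * C := by
      rw [Real.log_lt_iff_lt_exp (by linarith)]
      linarith
    set t := 2 * C - Real.log (u ^ 2 - 1) with ht_def
    have ht : 0 < t := by simp only [ht_def]; linarith
    refine ⟨Real.sqrt t, mem_Ioi.2 (Real.sqrt_pos.2 ht), ?_⟩
    rw [phi, Real.sq_sqrt ht.le]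
    have : 2 * C - t = Real.log (u ^ 2 - 1) := by simp [ht_def]
    rw [this, Real.exp_log (by linarith)]
    rw [show 1 + (u ^ 2 - 1) = u ^ 2 by ring]
    exact Real.sqrt_sq hu0.le

lemma log_phi_sq (C s : ℝ) : Real.log (phi C s ^ 2 - 1) = 2 * C - s ^ 2 := by
  rw [phi_sq, add_sub_cancel_left, Real.log_exp]

lemma one_lt_b (C : ℝ) : 1 < Real.sqrt (1 + Real.exp (2 * C)) :=
  Real.lt_sqrt_of_sq_lt (by nlinarith [Real.exp_pos (2 * C)])

/-- Integrability of the Gaussian bound. -/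
lemma int_exp (C : ℝ) : IntegrableOn (fun s => Real.exp (2 * C - s ^ 2)) (Ioi 0) := by
  have h : (fun s : ℝ => Real.exp (2 * C - s ^ 2))
      = fun s : ℝ => Real.exp (2 * C) * Real.exp (-1 * s ^ 2) := by
    funext s; rw [← Real.exp_add]; ring_nf
  rw [h]
  exact ((integrable_exp_neg_mul_sq one_pos).const_mul _).integrableOn

lemma int_sq_exp (C : ℝ) :
    IntegrableOn (fun s => s ^ 2 * Real.exp (2 * C - s ^ 2)) (Ioi 0) := by
  have h := (integrableOn_rpow_mul_exp_neg_mul_sq one_pos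
      (by norm_num : (-1:ℝ) < 2)).const_mul (Real.exp (2 * C))
  apply MeasureTheory.IntegrableOn.congr_fun h ?_ measurableSet_Ioi
  intro x hx
  show Real.exp (2 * C) * (x ^ (2:ℝ) * Real.exp (-1 * x ^ 2))
      = x ^ 2 * Real.exp (2 * C - x ^ 2)
  rw [Real.rpow_two, show 2 * C - x ^ 2 = 2 * C + -1 * x ^ 2 by ring, Real.exp_add]
  ring

lemma int_phi_sub_one (C : ℝ) :
    IntegrableOn (fun s => phi C s - 1) (Ioi 0) := by
  apply Integrable.mono' (int_exp C)
  · exact (((continuous_phi C).sub continuous_const)).aestronglyMeasurable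
  · refine Eventually.of_forall fun s => ?_
    rw [Real.norm_eq_abs, abs_of_nonneg (by linarith [one_le_phi C s])]
    exact phi_sub_one_le C s

lemma int_exp_div_phi (C : ℝ) :
    IntegrableOn (fun s => Real.exp (2 * C - s ^ 2) / phi C s) (Ioi 0) := by
  apply Integrable.mono' (int_exp C)
  · apply Continuous.aestronglyMeasurable
    exact ((continuous_const.sub (continuous_pow 2)).rexp).div (continuous_phi C)
      fun s => (phi_pos C s).ne'
  · refine Eventually.of_forall fun s => ?_
    rw [Real.norm_eq_abs,
      abs_of_nonneg (div_nonneg (Real.exp_pos _).le (phi_pos C s).le)]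
    exact div_le_self (Real.exp_pos _).le (one_le_phi C s)

lemma int_sq_exp_div_phi (C : ℝ) :
    IntegrableOn (fun s => s ^ 2 * Real.exp (2 * C - s ^ 2) / phi C s) (Ioi 0) := by
  apply Integrable.mono' (int_sq_exp C)
  · apply Continuous.aestronglyMeasurable
    exact (((continuous_pow 2).mul ((continuous_const.sub (continuous_pow 2)).rexp)).div
      (continuous_phi C) fun s => (phi_pos C s).ne')
  · refine Eventually.of_forall fun s => ?_
    rw [Real.norm_eq_abs,
      abs_of_nonneg (div_nonneg (by positivity) (phi_pos C s).le)]
    exact div_le_self (by positivity) (one_le_phi C s)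

lemma tendsto_mul_exp (C : ℝ) :
    Tendsto (fun s => s * Real.exp (2 * C - s ^ 2)) atTop (nhds 0) := by
  have h0 : Tendsto (fun x : ℝ => x ^ 1 * Real.exp (-x)) atTop (nhds 0) :=
    Real.tendsto_pow_mul_exp_neg_atTop_nhds_zero 1
  have key : Tendsto (fun s : ℝ => s * Real.exp (-s)) atTop (nhds 0) := by
    simpa using h0
  have key2 : Tendsto (fun s : ℝ => Real.exp (2 * C) * (s * Real.exp (-s)))
      atTop (nhds (Real.exp (2 * C) * 0)) := key.const_mul _
  rw [mul_zero] at key2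
  apply squeeze_zero' ?_ ?_ key2
  · filter_upwards [eventually_ge_atTop (0:ℝ)] with s hs
    positivity
  · filter_upwards [eventually_ge_atTop (1:ℝ)] with s hs
    have h1 : Real.exp (2 * C - s ^ 2) ≤ Real.exp (2 * C - s) :=
      Real.exp_le_exp.2 (by nlinarith)
    calc s * Real.exp (2 * C - s ^ 2) ≤ s * Real.exp (2 * C - s) := by
          apply mul_le_mul_of_nonneg_left h1 (by linarith)
      _ = Real.exp (2 * C) * (s * Real.exp (-s)) := by
          rw [show 2 * C - s = 2 * C + -s by ring, Real.exp_add]; ring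

/-- Integration by parts on `(0, ∞)`. -/
lemma ibp (C : ℝ) :
    ∫ s in Ioi (0:ℝ), s ^ 2 * Real.exp (2 * C - s ^ 2) / phi C s
      = ∫ s in Ioi (0:ℝ), (phi C s - 1) := by
  set K : ℝ → ℝ := fun s => s * (phi C s - 1) with hK_def
  have hK : ∀ s : ℝ, HasDerivAt K
      ((phi C s - 1) - s ^ 2 * Real.exp (2 * C - s ^ 2) / phi C s) s := by
    intro s
    have h := (hasDerivAt_id s).mul ((hasDerivAt_phi_s C s).sub_const 1)
    refine h.congr_deriv ?_
    simp only [id]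
    field_simp
    ring
  have hint : IntegrableOn
      (fun s => (phi C s - 1) - s ^ 2 * Real.exp (2 * C - s ^ 2) / phi C s) (Ioi 0) :=
    (int_phi_sub_one C).sub (int_sq_exp_div_phi C)
  have htend : Tendsto K atTop (nhds 0) := by
    apply squeeze_zero' ?_ ?_ (tendsto_mul_exp C)
    · filter_upwards [eventually_ge_atTop (0:ℝ)] with s hs
      have := one_le_phi C s
      simp only [hK_def]
      nlinarith
    · filter_upwards [eventually_ge_atTop (0:ℝ)] with s hs
      simp only [hK_def]
      have := phi_sub_one_le C s
      have := one_le_phi C s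
      nlinarith
  have h0 : K 0 = 0 := by simp [hK_def]
  have := integral_Ioi_of_hasDerivAt_of_tendsto
    (f := K) (a := 0)
    ((hK 0).continuousAt.continuousWithinAt)
    (fun x _ => hK x) hint htend
  rw [h0, sub_zero] at this
  have hsub := integral_sub (int_phi_sub_one C) (int_sq_exp_div_phi C)
  have : (∫ s in Ioi (0:ℝ), (phi C s - 1))
      - ∫ s in Ioi (0:ℝ), s ^ 2 * Real.exp (2 * C - s ^ 2) / phi C s = 0 := by
    rw [← hsub]; exact this
  linarith

lemma phi_injOn (C : ℝ) : InjOn (phi C) (Ioi 0) := (phi_strictAntiOn C).injOn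

/-- Change of variables for `ell`. -/
lemma ell_eq (C : ℝ) :
    ell C = ∫ s in Ioi (0:ℝ), Real.exp (2 * C - s ^ 2) / phi C s := by
  rw [ell, intervalIntegral.integral_of_le (one_lt_b C).le,
    MeasureTheory.integral_Ioc_eq_integral_Ioo, ← phi_image C,
    integral_image_eq_integral_abs_deriv_smul measurableSet_Ioi
      (fun s _ => (hasDerivAt_phi_s C s).hasDerivWithinAt) (phi_injOn C)]
  apply setIntegral_congr_fun measurableSet_Ioi
  intro s hs
  have hs' : 0 < s := mem_Ioi.1 hs
  have hphi := phi_pos C s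
  have hexp := Real.exp_pos (2 * C - s ^ 2)
  simp only [smul_eq_mul]
  rw [abs_neg, abs_of_nonneg (by positivity), log_phi_sq,
    show 2 * C - (2 * C - s ^ 2) = s ^ 2 by ring, Real.sqrt_sq hs'.le]
  field_simp

/-- Change of variables for `F`. -/
lemma F_eq (C : ℝ) :
    F C = 2 * ∫ s in Ioi (0:ℝ), s ^ 2 * Real.exp (2 * C - s ^ 2) / phi C s := by
  rw [F, intervalIntegral.integral_of_le (one_lt_b C).le,
    MeasureTheory.integral_Ioc_eq_integral_Ioo, ← phi_image C,
    integral_image_eq_integral_abs_deriv_smul measurableSet_Ioi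
      (fun s _ => (hasDerivAt_phi_s C s).hasDerivWithinAt) (phi_injOn C)]
  congr 1
  apply setIntegral_congr_fun measurableSet_Ioi
  intro s hs
  have hs' : 0 < s := mem_Ioi.1 hs
  have hphi := phi_pos C s
  simp only [smul_eq_mul]
  rw [abs_neg, abs_of_nonneg (by positivity), log_phi_sq,
    show 2 * C - (2 * C - s ^ 2) = s ^ 2 by ring, Real.sqrt_sq hs'.le]
  field_simp

/-- Differentiation under the integral sign. -/
lemma hasDerivAt_G (C : ℝ) :
    HasDerivAt (fun x => ∫ s in Ioi (0:ℝ), (phi x s - 1))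
      (∫ s in Ioi (0:ℝ), Real.exp (2 * C - s ^ 2) / phi C s) C := by
  have := hasDerivAt_integral_of_dominated_loc_of_deriv_le
    (μ := volume.restrict (Ioi (0:ℝ)))
    (F := fun x s => phi x s - 1)
    (F' := fun x s => Real.exp (2 * x - s ^ 2) / phi x s)
    (bound := fun s => Real.exp (2 * (C + 1) - s ^ 2))
    (x₀ := C) (Metric.ball_mem_nhds C one_pos)
    (Eventually.of_forall fun x =>
      (((continuous_phi x).sub continuous_const)).aestronglyMeasurable)
    (int_phi_sub_one C)
    (((((continuous_const.sub (continuous_pow 2)).rexp)).div (continuous_phi C)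
      fun s => (phi_pos C s).ne').aestronglyMeasurable)
    ?_ (int_exp (C + 1)) ?_
  · exact this.2
  · refine Eventually.of_forall fun s => fun x hx => ?_
    have hx' : x < C + 1 := by
      have := abs_lt.1 (mem_ball_iff_norm.1 hx)
      linarith [this.2]
    rw [Real.norm_eq_abs,
      abs_of_nonneg (div_nonneg (Real.exp_pos _).le (phi_pos x s).le)]
    calc Real.exp (2 * x - s ^ 2) / phi x s ≤ Real.exp (2 * x - s ^ 2) :=
          div_le_self (Real.exp_pos _).le (one_le_phi x s)
      _ ≤ Real.exp (2 * (C + 1) - s ^ 2) := Real.exp_le_exp.2 (by linarith)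
  · refine Eventually.of_forall fun s => fun x _ => ?_
    exact (hasDerivAt_phi_C s x).sub_const 1

end FHasDeriv

open FHasDeriv Set in
theorem F_hasDerivAt (C : ℝ) : HasDerivAt F (2 * ell C) C := by
  have hF : F = fun x => 2 * ∫ s in Ioi (0:ℝ), (phi x s - 1) := by
    funext x
    rw [F_eq x, ibp x]
  rw [hF, ell_eq C]
  exact (hasDerivAt_G C).const_mul 2
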